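/- Let k be a finite field of odd characteristic and let a ∈ k be a nonsquare such that 1 − 4a is a square in k. Then the polynomial X⁴ + X² + a has exactly two roots in k. -/

import Mathlib

open scoped Classical in
private lemma nonsq_mul_nonsq {k : Type*} [Field k] [Fintype k]
    {b c : k} (hb : ¬ IsSquare b) (hc : ¬ IsSquare c) : IsSquare (b * c) := by
  have hb0 : b ≠ 0 := fun h => hb (h ▸ IsSquare.zero)
  have hc0 : c ≠ 0 := fun h => hc (h ▸ IsSquare.zero)
  have h1 : quadraticChar k b = -1 := quadraticChar_neg_one_iff_not_isSquare.mpr hb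
  have h2 : quadraticChar k c = -1 := quadraticChar_neg_one_iff_not_isSquare.mpr hc
  have : quadraticChar k (b * c) = 1 := by rw [map_mul, h1, h2]; ring
  exact (quadraticChar_one_iff_isSquare (mul_ne_zero hb0 hc0)).mp this

private lemma aux_count {k : Type*} [Field k] [Fintype k] (hodd : ringChar k ≠ 2)
    {a z w : k} (ha : ¬ IsSquare a) (hsum : z + w = -1) (hprod : z * w = a)
    (hz : IsSquare z) (hw : ¬ IsSquare w) :
    Nat.card {x : k // x ^ 4 + x ^ 2 + a = 0} = 2 := by
  have h2 : (2 : k) ≠ 0 := Ring.two_ne_zero hodd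
  have ha0 : a ≠ 0 := fun h => ha (h ▸ IsSquare.zero)
  obtain ⟨r, hr⟩ := hz
  have hz0 : z ≠ 0 := fun h => ha0 (by rw [← hprod, h, zero_mul])
  have hr0 : r ≠ 0 := fun h => hz0 (by rw [hr, h, mul_zero])
  have hset : {x : k | x ^ 4 + x ^ 2 + a = 0} = {r, -r} := by
    ext x
    simp only [Set.mem_setOf_eq, Set.mem_insert_iff, Set.mem_singleton_iff]
    constructor
    · intro hx
      have hfac : (x ^ 2 - z) * (x ^ 2 - w) = 0 := by
        have : (x ^ 2 - z) * (x ^ 2 - w) = x ^ 4 - (z + w) * x ^ 2 + z * w := by ring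
        rw [this, hsum, hprod]; linear_combination hx
      rcases mul_eq_zero.mp hfac with h | h
      · have hfac2 : (x - r) * (x + r) = 0 := by
          have hxz : x ^ 2 = z := sub_eq_zero.mp h
          linear_combination hxz + hr
        rcases mul_eq_zero.mp hfac2 with h' | h'
        · exact Or.inl (sub_eq_zero.mp h')
        · exact Or.inr (eq_neg_of_add_eq_zero_left h')
      · exact absurd ⟨x, by rw [← sub_eq_zero.mp h]; ring⟩ hw
    · have hzroot : z * z + z + a = 0 := by linear_combination z * hsum - hprod
      have key : ∀ y : k, y * y = z → y ^ 4 + y ^ 2 + a = 0 := by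
        intro y hy
        linear_combination hzroot + (y * y + z + 1) * hy
      rintro (h | h)
      · rw [h]; exact key r hr.symm
      · rw [h]; exact key (-r) (by rw [neg_mul_neg]; exact hr.symm)
  have hne : r ≠ -r := by
    intro h
    apply hr0
    have : 2 * r = 0 := by linear_combination h
    exact (mul_eq_zero.mp this).resolve_left h2
  have : Nat.card ↥{x : k | x ^ 4 + x ^ 2 + a = 0} = 2 := by
    rw [Nat.card_coe_set_eq, hset, Set.ncard_pair hne]
  exact this

theorem two_roots_of_X_pow_four_add_X_sq_add_C
    (k : Type*) [Field k] [Fintype k] (hodd : ringChar k ≠ 2)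
    (a : k) (ha : ¬ IsSquare a) (h4a : IsSquare (1 - 4 * a)) :
    Nat.card {x : k // x ^ 4 + x ^ 2 + a = 0} = 2 := by
  have h2 : (2 : k) ≠ 0 := Ring.two_ne_zero hodd
  obtain ⟨s, hs⟩ := h4a
  set z := (-1 + s) / 2 with hzdef
  set w := (-1 - s) / 2 with hwdef
  have hsum : z + w = -1 := by rw [hzdef, hwdef]; field_simp; ring
  have e1 : 2 * z = -1 + s := by rw [hzdef]; field_simp
  have e2 : 2 * w = -1 - s := by rw [hwdef]; field_simp
  have hprod : z * w = a := by
    have h4 : (2 : k) * 2 ≠ 0 := mul_ne_zero h2 h2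
    apply mul_left_cancel₀ h4
    linear_combination (2 * w) * e1 + (-1 + s) * e2 + hs
  by_cases hz : IsSquare z
  · have hw : ¬ IsSquare w := fun hw => ha (hprod ▸ hz.mul hw)
    exact aux_count hodd ha hsum hprod hz hw
  · have hw : IsSquare w := by
      by_contra hw
      exact ha (hprod ▸ nonsq_mul_nonsq hz hw)
    exact aux_count hodd ha (by rw [add_comm] at hsum; exact hsum)
      (by rw [mul_comm] at hprod; exact hprod) hw hz
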